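/- There exists a constant C > 0 such that for every natural number n ≥ 1, the Riesz 1-energy of the normalized measure μ_n on K_n satisfies ∫∫ 1/|z − ζ| dμ_n(z) dμ_n(ζ) ≤ C·n; equivalently, 16^n ∫_{K_n} ∫_{K_n} |z − ζ|^{-1} dz dζ ≤ C·n, where the integrals are with respect to two-dimensional Lebesgue measure. -/

import Mathlib

open MeasureTheory Real Set

noncomputable section

/-- Digit value: `false ↦ 0`, `true ↦ 3`. -/
def dig (b : Bool) : ℝ := if b then 3 else 0

/-- Left endpoint `x_a = ∑ a_j 4^{-j}` of the interval coded by the word `a ∈ {0,3}^n`. -/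
def cantorX {n : ℕ} (a : Fin n → Bool) : ℝ :=
  ∑ j : Fin n, dig (a j) * (4 : ℝ) ^ (-((j : ℕ) + 1) : ℤ)

/-- The `n`-th generation `C_n` of the middle-half Cantor set. -/
def cantorC (n : ℕ) : Set ℝ :=
  ⋃ a : Fin n → Bool, Icc (cantorX a) (cantorX a + (4 : ℝ) ^ (-(n : ℤ)))

/-- The `n`-th generation `K_n = C_n × C_n` of the four-corner Cantor set. -/
def cantorK (n : ℕ) : Set (ℝ × ℝ) := cantorC n ×ˢ cantorC n

/-- The square `Q_{a,b}` of side `4^{-n}` of the `n`-th generation. -/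
def cantorSq {n : ℕ} (a b : Fin n → Bool) : Set (ℝ × ℝ) :=
  Icc (cantorX a) (cantorX a + (4 : ℝ) ^ (-(n : ℤ))) ×ˢ
    Icc (cantorX b) (cantorX b + (4 : ℝ) ^ (-(n : ℤ)))

/-- Orthogonal projection in direction `θ`: `proj_θ (x, y) = x cos θ + y sin θ`. -/
def projAngle (θ : ℝ) (p : ℝ × ℝ) : ℝ := p.1 * Real.cos θ + p.2 * Real.sin θ

/-- The Favard length of a planar set. -/
def favard (E : Set (ℝ × ℝ)) : ℝ :=
  (1 / π) * ∫ θ in (0 : ℝ)..π, (volume (projAngle θ '' E)).toReal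

end

noncomputable section

/-- Euclidean distance on `ℝ × ℝ`. -/
def euclDist (p q : ℝ × ℝ) : ℝ := Real.sqrt ((p.1 - q.1) ^ 2 + (p.2 - q.2) ^ 2)

end

noncomputable section

/-- abbreviation for `4^{-k}` as a real number -/
def pw (k : ℕ) : ℝ := ((4 : ℝ) ^ k)⁻¹

lemma pw_pos (k : ℕ) : 0 < pw k := by unfold pw; positivity

lemma pw_antitone {j k : ℕ} (h : j ≤ k) : pw k ≤ pw j := by
  unfold pw
  have h1 : (0:ℝ) < 4 ^ j := by positivity
  exact inv_anti₀ h1 (pow_le_pow_right₀ (by norm_num) h)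

lemma zpow_neg_natCast (k : ℕ) : (4 : ℝ) ^ (-(k : ℤ)) = pw k := by
  rw [zpow_neg, zpow_natCast, pw]

lemma dig_nonneg (b : Bool) : 0 ≤ dig b := by cases b <;> simp [dig]

lemma dig_le_three (b : Bool) : dig b ≤ 3 := by cases b <;> simp [dig]

/-- extension of a finite word to `ℕ → Bool` -/
def extBool {n : ℕ} (a : Fin n → Bool) : ℕ → Bool :=
  fun j => if h : j < n then a ⟨j, h⟩ else false

/-- partial sums version of `cantorX` -/
def Xr (f : ℕ → Bool) (k : ℕ) : ℝ := ∑ j ∈ Finset.range k, dig (f j) * pw (j + 1)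

lemma cantorX_eq {n : ℕ} (a : Fin n → Bool) : cantorX a = Xr (extBool a) n := by
  rw [cantorX, Xr, ← Fin.sum_univ_eq_sum_range (fun m => dig (extBool a m) * pw (m + 1)) n]
  apply Finset.sum_congr rfl
  intro j _
  have hc : (-((j : ℕ) + 1) : ℤ) = -(((j : ℕ) + 1 : ℕ) : ℤ) := by push_cast; ring
  rw [hc, zpow_neg_natCast, extBool, dif_pos j.isLt]

lemma sum_three_pw (m : ℕ) : ∑ j ∈ Finset.range m, 3 * pw (j + 1) = 1 - pw m := by
  induction m with
  | zero => simp [pw]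
  | succ m ih =>
      rw [Finset.sum_range_succ, ih, pw, pw, pow_succ]
      have h4 : (4 : ℝ) ^ m ≠ 0 := by positivity
      field_simp
      ring

lemma Xr_mono (f : ℕ → Bool) {k m : ℕ} (h : k ≤ m) : Xr f k ≤ Xr f m := by
  rw [Xr, Xr, ← Finset.sum_range_add_sum_Ico _ h]
  have : 0 ≤ ∑ j ∈ Finset.Ico k m, dig (f j) * pw (j + 1) :=
    Finset.sum_nonneg fun j _ => mul_nonneg (dig_nonneg _) (pw_pos _).le
  linarith

lemma sum_Ico_three_pw {k m : ℕ} (h : k ≤ m) :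
    ∑ j ∈ Finset.Ico k m, 3 * pw (j + 1) = pw k - pw m := by
  rw [Finset.sum_Ico_eq_sub _ h, sum_three_pw, sum_three_pw]
  ring

lemma Xr_le (f : ℕ → Bool) {k m : ℕ} (h : k ≤ m) : Xr f m ≤ Xr f k + (pw k - pw m) := by
  rw [Xr, Xr, ← Finset.sum_range_add_sum_Ico _ h, ← sum_Ico_three_pw h]
  have : ∑ j ∈ Finset.Ico k m, dig (f j) * pw (j + 1) ≤ ∑ j ∈ Finset.Ico k m, 3 * pw (j + 1) :=
    Finset.sum_le_sum fun j _ => mul_le_mul_of_nonneg_right (dig_le_three _) (pw_pos _).le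
  linarith

end

noncomputable section

lemma Xr_sep {f g : ℕ → Bool} {k j : ℕ} (hj : j < k) (hmin : ∀ i < j, f i = g i)
    (hf : f j = true) (hg : g j = false) : 3 * pw k ≤ Xr f k - Xr g k := by
  have hsub : Xr f k - Xr g k
      = ∑ i ∈ Finset.range k, (dig (f i) - dig (g i)) * pw (i + 1) := by
    rw [Xr, Xr, ← Finset.sum_sub_distrib]
    apply Finset.sum_congr rfl; intro i _; ring
  rw [hsub, ← Finset.sum_range_add_sum_Ico _ (Nat.succ_le_of_lt hj)]
  have h1 : ∑ i ∈ Finset.range (j + 1), (dig (f i) - dig (g i)) * pw (i + 1)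
      = 3 * pw (j + 1) := by
    rw [Finset.sum_range_succ, hf, hg]
    have hz : ∑ i ∈ Finset.range j, (dig (f i) - dig (g i)) * pw (i + 1) = 0 := by
      apply Finset.sum_eq_zero
      intro i hi
      rw [hmin i (Finset.mem_range.mp hi)]
      ring
    rw [hz]; simp [dig]
  have h2 : -(pw (j+1) - pw k) ≤ ∑ i ∈ Finset.Ico (j + 1) k, (dig (f i) - dig (g i)) * pw (i + 1) := by
    rw [← sum_Ico_three_pw (Nat.succ_le_of_lt hj), ← Finset.sum_neg_distrib]
    apply Finset.sum_le_sum
    intro i _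
    have := dig_nonneg (f i); have := dig_le_three (f i)
    have := dig_nonneg (g i); have := dig_le_three (g i)
    nlinarith [pw_pos (i + 1)]
  have h3 : pw k ≤ pw (j + 1) := pw_antitone (Nat.succ_le_of_lt hj)
  linarith

lemma cantorX_sep {k : ℕ} {c c' : Fin k → Bool} (h : c ≠ c') :
    3 * pw k ≤ |cantorX c - cantorX c'| := by
  have hex : ∃ m, extBool c m ≠ extBool c' m := by
    rcases Function.ne_iff.mp h with ⟨j, hj⟩
    exact ⟨j, by simpa [extBool, j.isLt] using hj⟩
  set j := Nat.find hex with hjdef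
  have hne : extBool c j ≠ extBool c' j := Nat.find_spec hex
  have hmin : ∀ i < j, extBool c i = extBool c' i := by
    intro i hi
    by_contra hcon
    exact absurd hi (not_lt.mpr (Nat.find_le hcon))
  have hjk : j < k := by
    by_contra hcon
    push_neg at hcon
    apply hne
    simp [extBool, Nat.lt_of_lt_of_le, show ¬ j < k from not_lt.mpr hcon]
  rw [cantorX_eq, cantorX_eq]
  cases hb : extBool c j with
  | false =>
      have hb' : extBool c' j = true := by
        cases hk : extBool c' j
        · exact absurd (hb.trans hk.symm) hne
        · rfl
      rw [abs_sub_comm]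
      calc 3 * pw k ≤ Xr (extBool c') k - Xr (extBool c) k :=
            Xr_sep hjk (fun i hi => (hmin i hi).symm) hb' hb
        _ ≤ |Xr (extBool c') k - Xr (extBool c) k| := le_abs_self _
  | true =>
      have hb' : extBool c' j = false := by
        cases hk : extBool c' j
        · rfl
        · exact absurd (hb.trans hk.symm) hne
      calc 3 * pw k ≤ Xr (extBool c) k - Xr (extBool c') k := Xr_sep hjk hmin hb hb'
        _ ≤ |Xr (extBool c) k - Xr (extBool c') k| := le_abs_self _

lemma cantorIcc_disjoint {k : ℕ} {c c' : Fin k → Bool} (h : c ≠ c') :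
    Disjoint (Icc (cantorX c) (cantorX c + pw k)) (Icc (cantorX c') (cantorX c' + pw k)) := by
  have hsep := cantorX_sep h
  have hp := pw_pos k
  rw [Set.disjoint_iff]
  rintro x ⟨⟨h1, h2⟩, ⟨h3, h4⟩⟩
  rcases abs_cases (cantorX c - cantorX c') with ⟨heq, _⟩ | ⟨heq, _⟩ <;> rw [heq] at hsep <;> linarith

/-- the prefix of length `k` of a word of length `n` -/
def pref {n k : ℕ} (h : k ≤ n) (a : Fin n → Bool) : Fin k → Bool :=
  fun j => a (Fin.castLE h j)

lemma Icc_subset_pref {n k : ℕ} (h : k ≤ n) (a : Fin n → Bool) :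
    Icc (cantorX a) (cantorX a + pw n) ⊆ Icc (cantorX (pref h a)) (cantorX (pref h a) + pw k) := by
  have hXr : Xr (extBool (pref h a)) k = Xr (extBool a) k := by
    apply Finset.sum_congr rfl
    intro j hj
    have hjk := Finset.mem_range.mp hj
    have hjn : j < n := lt_of_lt_of_le hjk h
    simp [extBool, hjk, hjn, pref, Fin.castLE]
  have h1 : cantorX (pref h a) ≤ cantorX a := by
    rw [cantorX_eq, cantorX_eq, hXr]; exact Xr_mono _ h
  have h2 : cantorX a + pw n ≤ cantorX (pref h a) + pw k := by
    rw [cantorX_eq, cantorX_eq, hXr]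
    have := Xr_le (extBool a) h
    linarith
  exact Icc_subset_Icc h1 h2

end

open scoped ENNReal
noncomputable section

lemma measurableSet_cantorC (n : ℕ) : MeasurableSet (cantorC n) :=
  MeasurableSet.iUnion fun _ => measurableSet_Icc

lemma measurableSet_cantorK (n : ℕ) : MeasurableSet (cantorK n) :=
  (measurableSet_cantorC n).prod (measurableSet_cantorC n)

lemma volume_prod_set (s t : Set ℝ) : volume (s ×ˢ t) = volume s * volume t := by
  rw [Measure.volume_eq_prod, Measure.prod_prod]

lemma volume_Icc_pw (x : ℝ) (k : ℕ) : volume (Icc x (x + pw k)) = ENNReal.ofReal (pw k) := by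
  rw [Real.volume_Icc]; congr 1; ring

lemma mem_cantorC_iff {n : ℕ} {z : ℝ} :
    z ∈ cantorC n ↔ ∃ a : Fin n → Bool, z ∈ Icc (cantorX a) (cantorX a + pw n) := by
  rw [cantorC]
  simp_rw [zpow_neg_natCast, Set.mem_iUnion]

lemma volume_cantorC_le (n : ℕ) :
    volume (cantorC n) ≤ (2 : ℝ≥0∞) ^ n * ENNReal.ofReal (pw n) := by
  calc volume (cantorC n)
      ≤ ∑ a : Fin n → Bool, volume (Icc (cantorX a) (cantorX a + (4:ℝ) ^ (-(n:ℤ)))) :=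
        measure_iUnion_fintype_le _ _
    _ = ∑ _a : Fin n → Bool, ENNReal.ofReal (pw n) := by
        apply Finset.sum_congr rfl; intro a _
        rw [zpow_neg_natCast, volume_Icc_pw]
    _ = (2 : ℝ≥0∞) ^ n * ENNReal.ofReal (pw n) := by
        rw [Finset.sum_const, nsmul_eq_mul]
        congr 1
        simp [Finset.card_univ]

lemma volume_cantorK_le (n : ℕ) : volume (cantorK n) ≤ ENNReal.ofReal (pw n) := by
  rw [cantorK, volume_prod_set]
  have h1 := volume_cantorC_le n
  have h2 : (2:ℝ≥0∞) ^ n * ENNReal.ofReal (pw n) = ENNReal.ofReal ((2:ℝ) ^ n * pw n) := by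
    rw [ENNReal.ofReal_mul (by positivity : (0:ℝ) ≤ 2 ^ n), ENNReal.ofReal_pow (by norm_num),
      ENNReal.ofReal_ofNat]
  rw [h2] at h1
  calc volume (cantorC n) * volume (cantorC n)
      ≤ ENNReal.ofReal ((2:ℝ) ^ n * pw n) * ENNReal.ofReal ((2:ℝ) ^ n * pw n) :=
        mul_le_mul' h1 h1
    _ = ENNReal.ofReal (((2:ℝ) ^ n * pw n) * ((2:ℝ) ^ n * pw n)) :=
        (ENNReal.ofReal_mul (mul_nonneg (by positivity) (pw_pos n).le)).symm
    _ = ENNReal.ofReal (pw n) := by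
        congr 1
        rw [pw, show (4:ℝ) = 2 * 2 by norm_num, mul_pow]
        have h0 : (0:ℝ) < 2 ^ n := by positivity
        field_simp

/-- descendants of a word `c` of length `k`: measure bound -/
lemma volume_cantorC_inter_Icc {n k : ℕ} (hk : k ≤ n) (c : Fin k → Bool) :
    volume (cantorC n ∩ Icc (cantorX c) (cantorX c + pw k))
      ≤ (2 : ℝ≥0∞) ^ (n - k) * ENNReal.ofReal (pw n) := by
  classical
  set A : Finset (Fin n → Bool) := Finset.univ.filter (fun a => pref hk a = c) with hA
  have hcover : cantorC n ∩ Icc (cantorX c) (cantorX c + pw k)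
      ⊆ ⋃ a ∈ A, Icc (cantorX a) (cantorX a + pw n) := by
    rintro z ⟨hz1, hz2⟩
    rcases mem_cantorC_iff.mp hz1 with ⟨a, ha⟩
    have hmem : z ∈ Icc (cantorX (pref hk a)) (cantorX (pref hk a) + pw k) :=
      Icc_subset_pref hk a ha
    have hac : pref hk a = c := by
      by_contra hne
      exact Set.disjoint_iff.mp (cantorIcc_disjoint hne) ⟨hmem, hz2⟩ |>.elim
    have haA : a ∈ A := by rw [hA]; exact Finset.mem_filter.mpr ⟨Finset.mem_univ _, hac⟩
    exact Set.mem_biUnion haA ha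
  have hcard : (A.card : ℝ≥0∞) ≤ (2 : ℝ≥0∞) ^ (n - k) := by
    have hinj : Set.InjOn (fun (a : Fin n → Bool) (i : Fin (n - k)) =>
        a ⟨k + i.val, by omega⟩) A := by
      intro a₁ h₁ a₂ h₂ heq
      have hc₁ : pref hk a₁ = c := by simpa [hA] using h₁
      have hc₂ : pref hk a₂ = c := by simpa [hA] using h₂
      funext j
      by_cases hj : (j : ℕ) < k
      · have e₁ : a₁ j = pref hk a₁ ⟨j.val, hj⟩ := by
          simp [pref, Fin.castLE]
        have e₂ : a₂ j = pref hk a₂ ⟨j.val, hj⟩ := by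
          simp [pref, Fin.castLE]
        rw [e₁, e₂, hc₁, hc₂]
      · have hjk : (j:ℕ) - k < n - k := by omega
        have := congrFun heq ⟨(j:ℕ) - k, hjk⟩
        simpa [Fin.ext_iff, show k + ((j:ℕ) - k) = (j:ℕ) by omega] using this
    have hle : A.card ≤ Fintype.card (Fin (n - k) → Bool) := by
      have := Finset.card_le_card_of_injOn _ (fun a _ => Finset.mem_univ _) hinj
      simpa [Finset.card_univ] using this
    calc (A.card : ℝ≥0∞) ≤ (Fintype.card (Fin (n - k) → Bool) : ℝ≥0∞) := by
          exact_mod_cast hle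
      _ = (2 : ℝ≥0∞) ^ (n - k) := by simp
  calc volume (cantorC n ∩ Icc (cantorX c) (cantorX c + pw k))
      ≤ volume (⋃ a ∈ A, Icc (cantorX a) (cantorX a + pw n)) := measure_mono hcover
    _ ≤ ∑ a ∈ A, volume (Icc (cantorX a) (cantorX a + pw n)) := measure_biUnion_finset_le _ _
    _ = A.card * ENNReal.ofReal (pw n) := by
        rw [Finset.sum_congr rfl fun a _ => volume_Icc_pw (cantorX a) n,
          Finset.sum_const, nsmul_eq_mul]
    _ ≤ (2 : ℝ≥0∞) ^ (n - k) * ENNReal.ofReal (pw n) := mul_le_mul_left hcard _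

/-- window lemma: a window of radius `4^{-k}` catches at most 4 generation-`k` pieces -/
lemma volume_cantorC_window {n k : ℕ} (hk : k ≤ n) (x : ℝ) :
    volume (cantorC n ∩ Icc (x - pw k) (x + pw k))
      ≤ 4 * ((2 : ℝ≥0∞) ^ (n - k) * ENNReal.ofReal (pw n)) := by
  classical
  set T : Finset (Fin k → Bool) :=
    Finset.univ.filter (fun c => cantorX c ≤ x + pw k ∧ x - 2 * pw k ≤ cantorX c) with hT
  have hcover : cantorC n ∩ Icc (x - pw k) (x + pw k)
      ⊆ ⋃ c ∈ T, (cantorC n ∩ Icc (cantorX c) (cantorX c + pw k)) := by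
    rintro z ⟨hz1, hz2⟩
    rcases mem_cantorC_iff.mp hz1 with ⟨a, ha⟩
    have hmem : z ∈ Icc (cantorX (pref hk a)) (cantorX (pref hk a) + pw k) :=
      Icc_subset_pref hk a ha
    have hTmem : pref hk a ∈ T := by
      rw [hT, Finset.mem_filter]
      refine ⟨Finset.mem_univ _, le_trans hmem.1 hz2.2, ?_⟩
      have := hmem.2
      have := hz2.1
      linarith
    exact Set.mem_biUnion hTmem ⟨hz1, hmem⟩
  have hcard : (T.card : ℝ≥0∞) ≤ 4 := by
    have hdisj : (T : Set (Fin k → Bool)).PairwiseDisjoint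
        (fun c => Icc (cantorX c) (cantorX c + pw k)) := by
      intro c₁ _ c₂ _ hne
      exact cantorIcc_disjoint hne
    have hunion : (⋃ c ∈ T, Icc (cantorX c) (cantorX c + pw k))
        ⊆ Icc (x - 2 * pw k) (x + 2 * pw k) := by
      intro z hz
      rcases Set.mem_iUnion₂.mp hz with ⟨c, hc, hzc⟩
      rw [hT, Finset.mem_filter] at hc
      have hp := pw_pos k
      constructor
      · linarith [hzc.1, hc.2.2]
      · linarith [hzc.2, hc.2.1]
    have heq : volume (⋃ c ∈ T, Icc (cantorX c) (cantorX c + pw k))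
        = ∑ c ∈ T, volume (Icc (cantorX c) (cantorX c + pw k)) :=
      measure_biUnion_finset hdisj fun _ _ => measurableSet_Icc
    have hle : (T.card : ℝ≥0∞) * ENNReal.ofReal (pw k) ≤ 4 * ENNReal.ofReal (pw k) := by
      calc (T.card : ℝ≥0∞) * ENNReal.ofReal (pw k)
          = ∑ c ∈ T, volume (Icc (cantorX c) (cantorX c + pw k)) := by
            rw [Finset.sum_congr rfl fun c _ => volume_Icc_pw (cantorX c) k,
              Finset.sum_const, nsmul_eq_mul]
        _ = volume (⋃ c ∈ T, Icc (cantorX c) (cantorX c + pw k)) := heq.symm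
        _ ≤ volume (Icc (x - 2 * pw k) (x + 2 * pw k)) := measure_mono hunion
        _ = ENNReal.ofReal (4 * pw k) := by rw [Real.volume_Icc]; congr 1; ring
        _ = 4 * ENNReal.ofReal (pw k) := by
            rw [ENNReal.ofReal_mul (by norm_num)]
            congr 1
            rw [ENNReal.ofReal_ofNat]
    have h0 : ENNReal.ofReal (pw k) ≠ 0 := by
      simp [ENNReal.ofReal_eq_zero, not_le, pw_pos k]
    exact (ENNReal.mul_le_mul_iff_left h0 ENNReal.ofReal_ne_top).mp hle
  calc volume (cantorC n ∩ Icc (x - pw k) (x + pw k))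
      ≤ volume (⋃ c ∈ T, (cantorC n ∩ Icc (cantorX c) (cantorX c + pw k))) :=
        measure_mono hcover
    _ ≤ ∑ c ∈ T, volume (cantorC n ∩ Icc (cantorX c) (cantorX c + pw k)) :=
        measure_biUnion_finset_le _ _
    _ ≤ ∑ _c ∈ T, (2 : ℝ≥0∞) ^ (n - k) * ENNReal.ofReal (pw n) :=
        Finset.sum_le_sum fun c _ => volume_cantorC_inter_Icc hk c
    _ = T.card * ((2 : ℝ≥0∞) ^ (n - k) * ENNReal.ofReal (pw n)) := by
        rw [Finset.sum_const, nsmul_eq_mul]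
    _ ≤ 4 * ((2 : ℝ≥0∞) ^ (n - k) * ENNReal.ofReal (pw n)) := mul_le_mul_left hcard _

end

noncomputable section
open intervalIntegral

/-- the profile function `|u|^{-1/2}` written with rpow so that integration lemmas apply -/
def Wf (u : ℝ) : ℝ := u ^ (-(2⁻¹:ℝ)) + (-u) ^ (-(2⁻¹:ℝ))

lemma rpow_neg_half_of_neg {u : ℝ} (hu : u < 0) : u ^ (-(2⁻¹:ℝ)) = 0 := by
  rw [Real.rpow_def_of_neg hu, show (-(2⁻¹:ℝ)) * π = -(π/2) by ring, Real.cos_neg,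
    Real.cos_pi_div_two, mul_zero]

lemma rpow_half_of_neg {u : ℝ} (hu : u < 0) : u ^ ((2⁻¹:ℝ)) = 0 := by
  rw [Real.rpow_def_of_neg hu, show ((2⁻¹:ℝ)) * π = π/2 by ring, Real.cos_pi_div_two, mul_zero]

lemma rpow_neg_half_nonneg (u : ℝ) : 0 ≤ u ^ (-(2⁻¹:ℝ)) := by
  rcases le_or_gt 0 u with h | h
  · exact Real.rpow_nonneg h _
  · rw [rpow_neg_half_of_neg h]

lemma Wf_nonneg (u : ℝ) : 0 ≤ Wf u := add_nonneg (rpow_neg_half_nonneg u) (rpow_neg_half_nonneg _)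

lemma rpow_neg_half_eq_inv_sqrt {u : ℝ} (hu : 0 ≤ u) : u ^ (-(2⁻¹:ℝ)) = (Real.sqrt u)⁻¹ := by
  rw [Real.rpow_neg hu, Real.sqrt_eq_rpow, one_div]

lemma Wf_eq {u : ℝ} (hu : u ≠ 0) : Wf u = (Real.sqrt |u|)⁻¹ := by
  rcases hu.lt_or_gt with h | h
  · rw [Wf, rpow_neg_half_of_neg h, zero_add, abs_of_neg h,
      rpow_neg_half_eq_inv_sqrt (by linarith : (0:ℝ) ≤ -u)]
  · rw [Wf, rpow_neg_half_of_neg (by linarith : -u < 0), add_zero, abs_of_pos h,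
      rpow_neg_half_eq_inv_sqrt h.le]

lemma measurable_Wf : Measurable Wf := by
  apply Measurable.add
  · exact measurable_id.pow measurable_const
  · exact measurable_id.neg.pow measurable_const

lemma Wf_intervalIntegrable (t : ℝ) : IntervalIntegrable Wf volume (-t) t := by
  have h1 : IntervalIntegrable (fun u : ℝ => u ^ (-(2⁻¹:ℝ))) volume (-t) t :=
    intervalIntegral.intervalIntegrable_rpow' (by norm_num)
  have h2 : IntervalIntegrable (fun u : ℝ => (-u) ^ (-(2⁻¹:ℝ))) volume (-t) t := by
    have := (intervalIntegral.intervalIntegrable_rpow'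
      (a := t) (b := -t) (r := -(2⁻¹:ℝ)) (by norm_num))
    have := (IntervalIntegrable.iff_comp_neg (f := fun u : ℝ => u ^ (-(2⁻¹:ℝ)))).mp this
    simpa using this
  exact h1.add h2

lemma Wf_integral {t : ℝ} (ht : 0 < t) : ∫ u in (-t)..t, Wf u = 4 * Real.sqrt t := by
  have h1 : IntervalIntegrable (fun u : ℝ => u ^ (-(2⁻¹:ℝ))) volume (-t) t :=
    intervalIntegral.intervalIntegrable_rpow' (by norm_num)
  have h2 : IntervalIntegrable (fun u : ℝ => (-u) ^ (-(2⁻¹:ℝ))) volume (-t) t := by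
    have := (intervalIntegral.intervalIntegrable_rpow'
      (a := t) (b := -t) (r := -(2⁻¹:ℝ)) (by norm_num))
    have := (IntervalIntegrable.iff_comp_neg (f := fun u : ℝ => u ^ (-(2⁻¹:ℝ)))).mp this
    simpa using this
  have key : ∫ u in (-t)..t, u ^ (-(2⁻¹:ℝ)) = 2 * Real.sqrt t := by
    rw [integral_rpow (Or.inl (by norm_num))]
    rw [show (-(2⁻¹:ℝ) + 1) = 2⁻¹ by norm_num, rpow_half_of_neg (by linarith : -t < 0), sub_zero,
      Real.sqrt_eq_rpow, one_div]
    ring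
  have key2 : ∫ u in (-t)..t, (-u) ^ (-(2⁻¹:ℝ)) = 2 * Real.sqrt t := by
    rw [intervalIntegral.integral_comp_neg (fun u : ℝ => u ^ (-(2⁻¹:ℝ))), neg_neg, key]
  simp only [Wf]
  rw [intervalIntegral.integral_add h1 h2, key, key2]
  ring

lemma Wf_setIntegrable (a : ℝ) {t : ℝ} (ht : 0 < t) :
    IntegrableOn (fun x => Wf (x - a)) (Icc (a - t) (a + t)) volume := by
  have h := (Wf_intervalIntegrable t).comp_sub_right a
  rw [show -t + a = a - t by ring, show t + a = a + t by ring] at h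
  exact (intervalIntegrable_iff_integrableOn_Icc_of_le (by linarith)).mp h

lemma Wf_setIntegral (a : ℝ) {t : ℝ} (ht : 0 < t) :
    ∫ x in Icc (a - t) (a + t), Wf (x - a) = 4 * Real.sqrt t := by
  rw [MeasureTheory.integral_Icc_eq_integral_Ioc,
    ← intervalIntegral.integral_of_le (by linarith : a - t ≤ a + t),
    intervalIntegral.integral_comp_sub_right Wf a,
    show a - t - a = -t by ring, show a + t - a = t by ring, Wf_integral ht]

end

noncomputable section
open scoped ENNReal

lemma volume_cantorK_window {n k : ℕ} (hk : k ≤ n) (ζ : ℝ × ℝ) :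
    volume (cantorK n ∩ (Icc (ζ.1 - pw k) (ζ.1 + pw k) ×ˢ Icc (ζ.2 - pw k) (ζ.2 + pw k)))
      ≤ ENNReal.ofReal (16 * (pw n * pw k)) := by
  rw [cantorK, Set.prod_inter_prod, volume_prod_set]
  have h1 := volume_cantorC_window hk ζ.1
  have h2 := volume_cantorC_window hk ζ.2
  have hW : 4 * ((2 : ℝ≥0∞) ^ (n - k) * ENNReal.ofReal (pw n))
      = ENNReal.ofReal (4 * (2:ℝ)^(n-k) * pw n) := by
    rw [ENNReal.ofReal_mul (by positivity : (0:ℝ) ≤ 4 * 2^(n-k)),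
      ENNReal.ofReal_mul (by norm_num : (0:ℝ) ≤ 4),
      ENNReal.ofReal_pow (by norm_num : (0:ℝ) ≤ 2), ENNReal.ofReal_ofNat,
      ENNReal.ofReal_ofNat, mul_assoc]
  rw [hW] at h1 h2
  have key : (4*(2:ℝ)^(n-k)*pw n) * (4*(2:ℝ)^(n-k)*pw n) = 16*(pw n * pw k) := by
    have e1 : (2:ℝ)^(n-k) * (2:ℝ)^(n-k) = (4:ℝ)^(n-k) := by rw [← mul_pow]; norm_num
    have e2 : (4:ℝ)^(n-k) * (4:ℝ)^k = (4:ℝ)^n := by rw [← pow_add]; congr 1; omega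
    have h4n : ((4:ℝ)^n) ≠ 0 := by positivity
    have h4k : ((4:ℝ)^k) ≠ 0 := by positivity
    have e5 : (4:ℝ)^(n-k) = 4^n / 4^k := (eq_div_iff h4k).mpr e2
    have e3 : (4:ℝ)^(n-k) * ((4^n:ℝ)⁻¹ * (4^n:ℝ)⁻¹) = (4^n:ℝ)⁻¹ * (4^k:ℝ)⁻¹ := by
      rw [e5]; field_simp
    rw [pw, pw]
    calc (4*(2:ℝ)^(n-k)*((4:ℝ)^n)⁻¹) * (4*(2:ℝ)^(n-k)*((4:ℝ)^n)⁻¹)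
        = 16 * ((2:ℝ)^(n-k) * (2:ℝ)^(n-k)) * (((4:ℝ)^n)⁻¹ * ((4:ℝ)^n)⁻¹) := by ring
      _ = 16 * ((4:ℝ)^(n-k) * (((4:ℝ)^n)⁻¹ * ((4:ℝ)^n)⁻¹)) := by rw [e1]; ring
      _ = 16 * (((4:ℝ)^n)⁻¹ * ((4:ℝ)^k)⁻¹) := by rw [e3]
  calc volume (cantorC n ∩ Icc (ζ.1 - pw k) (ζ.1 + pw k))
        * volume (cantorC n ∩ Icc (ζ.2 - pw k) (ζ.2 + pw k))
      ≤ ENNReal.ofReal (4*(2:ℝ)^(n-k)*pw n) * ENNReal.ofReal (4*(2:ℝ)^(n-k)*pw n) :=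
        mul_le_mul' h1 h2
    _ = ENNReal.ofReal ((4*(2:ℝ)^(n-k)*pw n) * (4*(2:ℝ)^(n-k)*pw n)) :=
        (ENNReal.ofReal_mul (mul_nonneg (mul_nonneg (by norm_num) (by positivity)) (pw_pos n).le)).symm
    _ = ENNReal.ofReal (16*(pw n * pw k)) := by rw [key]

lemma near_lintegral (ζ : ℝ × ℝ) {t : ℝ} (ht : 0 < t) :
    ∫⁻ z in (Icc (ζ.1 - t) (ζ.1 + t) ×ˢ Icc (ζ.2 - t) (ζ.2 + t)),
      ENNReal.ofReal ((Real.sqrt 2)⁻¹ * (Wf (z.1 - ζ.1) * Wf (z.2 - ζ.2)))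
      ≤ ENNReal.ofReal (16 * t) := by
  have hf : IntegrableOn (fun x => Wf (x - ζ.1)) (Icc (ζ.1 - t) (ζ.1 + t)) volume :=
    Wf_setIntegrable ζ.1 ht
  have hg : IntegrableOn (fun y => Wf (y - ζ.2)) (Icc (ζ.2 - t) (ζ.2 + t)) volume :=
    Wf_setIntegrable ζ.2 ht
  have hprod : (volume : Measure (ℝ × ℝ)).restrict
        (Icc (ζ.1 - t) (ζ.1 + t) ×ˢ Icc (ζ.2 - t) (ζ.2 + t))
      = (volume.restrict (Icc (ζ.1 - t) (ζ.1 + t))).prod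
          (volume.restrict (Icc (ζ.2 - t) (ζ.2 + t))) := by
    rw [Measure.volume_eq_prod, Measure.prod_restrict]
  have hint : Integrable (fun z : ℝ × ℝ => (Real.sqrt 2)⁻¹ * (Wf (z.1 - ζ.1) * Wf (z.2 - ζ.2)))
      ((volume.restrict (Icc (ζ.1 - t) (ζ.1 + t))).prod
        (volume.restrict (Icc (ζ.2 - t) (ζ.2 + t)))) :=
    (Integrable.mul_prod hf hg).const_mul _
  rw [hprod, ← MeasureTheory.ofReal_integral_eq_lintegral_ofReal hint
    (Filter.Eventually.of_forall fun z =>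
      mul_nonneg (inv_nonneg.mpr (Real.sqrt_nonneg 2))
        (mul_nonneg (Wf_nonneg _) (Wf_nonneg _)))]
  apply ENNReal.ofReal_le_ofReal
  rw [MeasureTheory.integral_const_mul,
    MeasureTheory.integral_prod_mul (fun x => Wf (x - ζ.1)) (fun y => Wf (y - ζ.2)),
    Wf_setIntegral ζ.1 ht, Wf_setIntegral ζ.2 ht]
  have hs : Real.sqrt t * Real.sqrt t = t := Real.mul_self_sqrt ht.le
  have h3 : (0:ℝ) < Real.sqrt 2 := by positivity
  have hinv : (Real.sqrt 2)⁻¹ ≤ 1 := by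
    rw [inv_le_one₀ h3]
    rw [show (1:ℝ) = Real.sqrt 1 by simp]
    exact Real.sqrt_le_sqrt (by norm_num)
  rw [show 4*Real.sqrt t*(4*Real.sqrt t) = 16*(Real.sqrt t * Real.sqrt t) by ring, hs]
  exact mul_le_of_le_one_left (by positivity) hinv

lemma euclDist_nonneg (z ζ : ℝ × ℝ) : 0 ≤ euclDist z ζ := Real.sqrt_nonneg _

lemma abs_fst_le_euclDist (z ζ : ℝ × ℝ) : |z.1 - ζ.1| ≤ euclDist z ζ := by
  rw [euclDist, ← Real.sqrt_sq_eq_abs]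
  exact Real.sqrt_le_sqrt (by nlinarith [sq_nonneg (z.2 - ζ.2)])

lemma abs_snd_le_euclDist (z ζ : ℝ × ℝ) : |z.2 - ζ.2| ≤ euclDist z ζ := by
  rw [euclDist, ← Real.sqrt_sq_eq_abs]
  exact Real.sqrt_le_sqrt (by nlinarith [sq_nonneg (z.1 - ζ.1)])

lemma euclDist_prod_lower (z ζ : ℝ × ℝ) :
    Real.sqrt 2 * (Real.sqrt |z.1 - ζ.1| * Real.sqrt |z.2 - ζ.2|) ≤ euclDist z ζ := by
  rw [euclDist]
  calc Real.sqrt 2 * (Real.sqrt |z.1 - ζ.1| * Real.sqrt |z.2 - ζ.2|)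
      = Real.sqrt (2 * (|z.1 - ζ.1| * |z.2 - ζ.2|)) := by
        rw [Real.sqrt_mul (by norm_num : (0:ℝ) ≤ 2), Real.sqrt_mul (abs_nonneg _)]
    _ ≤ Real.sqrt ((z.1 - ζ.1)^2 + (z.2 - ζ.2)^2) := by
        apply Real.sqrt_le_sqrt
        nlinarith [sq_abs (z.1 - ζ.1), sq_abs (z.2 - ζ.2), sq_nonneg (|z.1-ζ.1| - |z.2-ζ.2|)]

end

noncomputable section
open scoped ENNReal

/-- square window of radius `r` around `ζ` -/
def sqWin (ζ : ℝ × ℝ) (r : ℝ) : Set (ℝ × ℝ) :=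
  Icc (ζ.1 - r) (ζ.1 + r) ×ˢ Icc (ζ.2 - r) (ζ.2 + r)

lemma measurableSet_sqWin (ζ : ℝ × ℝ) (r : ℝ) : MeasurableSet (sqWin ζ r) :=
  measurableSet_Icc.prod measurableSet_Icc

lemma mem_sqWin_of_dist {ζ z : ℝ × ℝ} {r : ℝ} (h : euclDist z ζ ≤ r) : z ∈ sqWin ζ r := by
  have h1 := (abs_fst_le_euclDist z ζ).trans h
  have h2 := (abs_snd_le_euclDist z ζ).trans h
  rw [abs_le] at h1 h2
  exact ⟨⟨by linarith [h1.1], by linarith [h1.2]⟩, ⟨by linarith [h2.1], by linarith [h2.2]⟩⟩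

/-- the dominating function -/
def Gfun (n : ℕ) (ζ : ℝ × ℝ) (z : ℝ × ℝ) : ℝ≥0∞ :=
  1 + (∑ k ∈ Finset.range (n+1),
        (sqWin ζ (pw k)).indicator (fun _ => ENNReal.ofReal ((4:ℝ)^(k+1))) z)
    + (sqWin ζ (pw (n+1))).indicator
        (fun w => ENNReal.ofReal ((Real.sqrt 2)⁻¹ * (Wf (w.1 - ζ.1) * Wf (w.2 - ζ.2)))) z

lemma pointwise_bound (n : ℕ) (ζ z : ℝ × ℝ) (h1 : z.1 ≠ ζ.1) (h2 : z.2 ≠ ζ.2) :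
    ENNReal.ofReal ((euclDist z ζ)⁻¹) ≤ Gfun n ζ z := by
  have hd0 : 0 < euclDist z ζ :=
    lt_of_lt_of_le (abs_pos.mpr (sub_ne_zero.mpr h1)) (abs_fst_le_euclDist z ζ)
  by_cases hlt : euclDist z ζ < pw (n+1)
  · -- near regime
    have hmem : z ∈ sqWin ζ (pw (n+1)) := mem_sqWin_of_dist hlt.le
    have a1 : 0 < Real.sqrt |z.1 - ζ.1| :=
      Real.sqrt_pos.mpr (abs_pos.mpr (sub_ne_zero.mpr h1))
    have a2 : 0 < Real.sqrt |z.2 - ζ.2| :=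
      Real.sqrt_pos.mpr (abs_pos.mpr (sub_ne_zero.mpr h2))
    have hs2 : 0 < Real.sqrt 2 := by positivity
    have key : (euclDist z ζ)⁻¹ ≤ (Real.sqrt 2)⁻¹ * (Wf (z.1 - ζ.1) * Wf (z.2 - ζ.2)) := by
      rw [Wf_eq (sub_ne_zero.mpr h1), Wf_eq (sub_ne_zero.mpr h2)]
      have hlow := euclDist_prod_lower z ζ
      have hpos : 0 < Real.sqrt 2 * (Real.sqrt |z.1 - ζ.1| * Real.sqrt |z.2 - ζ.2|) := by
        positivity
      calc (euclDist z ζ)⁻¹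
          ≤ (Real.sqrt 2 * (Real.sqrt |z.1 - ζ.1| * Real.sqrt |z.2 - ζ.2|))⁻¹ :=
            inv_anti₀ hpos hlow
        _ = (Real.sqrt 2)⁻¹ * ((Real.sqrt |z.1 - ζ.1|)⁻¹ * (Real.sqrt |z.2 - ζ.2|)⁻¹) := by
            rw [mul_inv, mul_inv]
    calc ENNReal.ofReal ((euclDist z ζ)⁻¹)
        ≤ (sqWin ζ (pw (n+1))).indicator
            (fun w => ENNReal.ofReal ((Real.sqrt 2)⁻¹ * (Wf (w.1 - ζ.1) * Wf (w.2 - ζ.2)))) z := by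
          rw [Set.indicator_of_mem hmem]
          exact ENNReal.ofReal_le_ofReal key
      _ ≤ Gfun n ζ z := le_add_self
  · push_neg at hlt
    by_cases hbig : 1 ≤ euclDist z ζ
    · have key : (euclDist z ζ)⁻¹ ≤ 1 := by rw [inv_le_one₀ hd0]; exact hbig
      calc ENNReal.ofReal ((euclDist z ζ)⁻¹) ≤ 1 := by
            simpa using ENNReal.ofReal_le_ofReal key
        _ ≤ Gfun n ζ z := by
            rw [Gfun]
            exact le_add_of_le_of_nonneg (le_add_of_le_of_nonneg le_rfl zero_le) zero_le
    · push_neg at hbig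
      have hex : ∃ k, pw (k+1) ≤ euclDist z ζ := ⟨n, hlt⟩
      set k := Nat.find hex with hkdef
      have hk1 : pw (k+1) ≤ euclDist z ζ := Nat.find_spec hex
      have hkn : k ≤ n := Nat.find_le hlt
      have hk2 : euclDist z ζ ≤ pw k := by
        rcases Nat.eq_zero_or_pos k with h0 | h0
        · rw [h0, pw]; simpa using hbig.le
        · have hmin := Nat.find_min hex (m := k - 1) (by omega)
          push_neg at hmin
          rw [show k - 1 + 1 = k by omega] at hmin
          exact hmin.le
      have hmem : z ∈ sqWin ζ (pw k) := mem_sqWin_of_dist hk2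
      have key : (euclDist z ζ)⁻¹ ≤ (4:ℝ)^(k+1) := by
        have := inv_anti₀ (pw_pos (k+1)) hk1
        rwa [pw, inv_inv] at this
      calc ENNReal.ofReal ((euclDist z ζ)⁻¹)
          ≤ (sqWin ζ (pw k)).indicator (fun _ => ENNReal.ofReal ((4:ℝ)^(k+1))) z := by
            rw [Set.indicator_of_mem hmem]
            exact ENNReal.ofReal_le_ofReal key
        _ ≤ ∑ j ∈ Finset.range (n+1),
              (sqWin ζ (pw j)).indicator (fun _ => ENNReal.ofReal ((4:ℝ)^(j+1))) z :=
            Finset.single_le_sum (f := fun j =>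
              (sqWin ζ (pw j)).indicator (fun _ => ENNReal.ofReal ((4:ℝ)^(j+1))) z)
              (fun _ _ => zero_le) (Finset.mem_range.mpr (by omega))
        _ ≤ Gfun n ζ z := by
            rw [Gfun]
            exact le_add_of_le_of_nonneg (le_add_of_nonneg_of_le zero_le le_rfl) zero_le

end

noncomputable section
open scoped ENNReal

lemma measurable_euclDist_right (ζ : ℝ × ℝ) : Measurable fun z : ℝ × ℝ => euclDist z ζ := by
  apply Measurable.sqrt
  fun_prop

lemma measurable_euclDist_pair : Measurable fun p : (ℝ × ℝ) × (ℝ × ℝ) => euclDist p.1 p.2 := by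
  apply Measurable.sqrt
  fun_prop

lemma lintegral_Gfun_term2 {n k : ℕ} (hk : k ≤ n) (ζ : ℝ × ℝ) :
    (∫⁻ z in cantorK n, (sqWin ζ (pw k)).indicator
      (fun _ => ENNReal.ofReal ((4:ℝ)^(k+1))) z) ≤ ENNReal.ofReal (64 * pw n) := by
  rw [lintegral_indicator (measurableSet_sqWin ζ (pw k))]
  rw [MeasureTheory.setLIntegral_const]
  rw [Measure.restrict_apply (measurableSet_sqWin ζ (pw k))]
  have hvol : volume (sqWin ζ (pw k) ∩ cantorK n) ≤ ENNReal.ofReal (16 * (pw n * pw k)) := by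
    rw [Set.inter_comm]
    exact volume_cantorK_window hk ζ
  calc ENNReal.ofReal ((4:ℝ)^(k+1)) * volume (sqWin ζ (pw k) ∩ cantorK n)
      ≤ ENNReal.ofReal ((4:ℝ)^(k+1)) * ENNReal.ofReal (16 * (pw n * pw k)) :=
        mul_le_mul_right hvol _
    _ = ENNReal.ofReal ((4:ℝ)^(k+1) * (16 * (pw n * pw k))) :=
        (ENNReal.ofReal_mul (by positivity)).symm
    _ = ENNReal.ofReal (64 * pw n) := by
        congr 1
        rw [pw, pw, pow_succ]
        have h4 : ((4:ℝ)^k) ≠ 0 := by positivity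
        field_simp
        ring

lemma inner_lintegral_le (n : ℕ) (ζ : ℝ × ℝ) :
    ∫⁻ z in cantorK n, ENNReal.ofReal ((euclDist z ζ)⁻¹)
      ≤ ENNReal.ofReal ((64 * ((n:ℝ)+1) + 5) * pw n) := by
  have hae : ∀ᵐ z : ℝ × ℝ ∂(volume.restrict (cantorK n)),
      ENNReal.ofReal ((euclDist z ζ)⁻¹) ≤ Gfun n ζ z := by
    apply ae_restrict_of_ae
    have e1 : {z : ℝ × ℝ | z.1 = ζ.1} = ({ζ.1} : Set ℝ) ×ˢ (univ : Set ℝ) := by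
      ext ⟨x, y⟩; simp [eq_comm]
    have e2 : {z : ℝ × ℝ | z.2 = ζ.2} = (univ : Set ℝ) ×ˢ ({ζ.2} : Set ℝ) := by
      ext ⟨x, y⟩; simp [eq_comm]
    have hnull : volume {z : ℝ × ℝ | z.1 = ζ.1 ∨ z.2 = ζ.2} = 0 := by
      rw [Set.setOf_or]
      apply measure_union_null
      · rw [e1, volume_prod_set, Real.volume_singleton, zero_mul]
      · rw [e2, volume_prod_set, Real.volume_singleton, mul_zero]
    have hgen : ∀ᵐ z : ℝ × ℝ, ¬(z.1 = ζ.1 ∨ z.2 = ζ.2) := by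
      rw [MeasureTheory.ae_iff]
      refine measure_mono_null ?_ hnull
      intro a ha
      simp only [Set.mem_setOf_eq] at ha ⊢
      tauto
    filter_upwards [hgen] with z hz
    push_neg at hz
    exact pointwise_bound n ζ z hz.1 hz.2
  have hS : Measurable fun z : ℝ × ℝ => ∑ k ∈ Finset.range (n+1),
      (sqWin ζ (pw k)).indicator (fun _ => ENNReal.ofReal ((4:ℝ)^(k+1))) z :=
    Finset.measurable_sum _ fun k _ =>
      Measurable.indicator measurable_const (measurableSet_sqWin ζ (pw k))
  have hC : Measurable fun z : ℝ × ℝ => (sqWin ζ (pw (n+1))).indicator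
      (fun w => ENNReal.ofReal ((Real.sqrt 2)⁻¹ * (Wf (w.1 - ζ.1) * Wf (w.2 - ζ.2)))) z := by
    apply Measurable.indicator _ (measurableSet_sqWin ζ (pw (n+1)))
    apply Measurable.ennreal_ofReal
    exact measurable_const.mul
      (((measurable_Wf.comp (measurable_fst.sub measurable_const))).mul
        ((measurable_Wf.comp (measurable_snd.sub measurable_const))))
  calc ∫⁻ z in cantorK n, ENNReal.ofReal ((euclDist z ζ)⁻¹)
      ≤ ∫⁻ z in cantorK n, Gfun n ζ z := lintegral_mono_ae hae
    _ = (∫⁻ z in cantorK n, (1 + ∑ k ∈ Finset.range (n+1),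
            (sqWin ζ (pw k)).indicator (fun _ => ENNReal.ofReal ((4:ℝ)^(k+1))) z))
        + ∫⁻ z in cantorK n, (sqWin ζ (pw (n+1))).indicator
            (fun w => ENNReal.ofReal ((Real.sqrt 2)⁻¹ * (Wf (w.1 - ζ.1) * Wf (w.2 - ζ.2)))) z := by
        simp only [Gfun]
        exact lintegral_add_left (measurable_const.add hS) _
    _ = ((∫⁻ _z in cantorK n, 1)
          + ∫⁻ z in cantorK n, ∑ k ∈ Finset.range (n+1),
              (sqWin ζ (pw k)).indicator (fun _ => ENNReal.ofReal ((4:ℝ)^(k+1))) z)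
        + ∫⁻ z in cantorK n, (sqWin ζ (pw (n+1))).indicator
            (fun w => ENNReal.ofReal ((Real.sqrt 2)⁻¹ * (Wf (w.1 - ζ.1) * Wf (w.2 - ζ.2)))) z := by
        rw [lintegral_add_left measurable_const]
    _ ≤ (ENNReal.ofReal (pw n) + ENNReal.ofReal ((n+1) * (64 * pw n)))
        + ENNReal.ofReal (4 * pw n) := by
        gcongr
        · rw [MeasureTheory.setLIntegral_one]
          exact volume_cantorK_le n
        · rw [MeasureTheory.lintegral_finset_sum _ fun k _ =>
            Measurable.indicator measurable_const (measurableSet_sqWin ζ (pw k))]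
          calc ∑ k ∈ Finset.range (n+1), ∫⁻ z in cantorK n,
                (sqWin ζ (pw k)).indicator (fun _ => ENNReal.ofReal ((4:ℝ)^(k+1))) z
              ≤ ∑ _k ∈ Finset.range (n+1), ENNReal.ofReal (64 * pw n) :=
                Finset.sum_le_sum fun k hkm =>
                  lintegral_Gfun_term2 (Nat.lt_succ_iff.mp (Finset.mem_range.mp hkm)) ζ
            _ = ENNReal.ofReal ((n+1) * (64 * pw n)) := by
                rw [Finset.sum_const, Finset.card_range, nsmul_eq_mul,
                  ← ENNReal.ofReal_natCast, ← ENNReal.ofReal_mul (by positivity)]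
                congr 2
                push_cast
                ring
        · calc ∫⁻ z in cantorK n, (sqWin ζ (pw (n+1))).indicator
                (fun w => ENNReal.ofReal ((Real.sqrt 2)⁻¹ * (Wf (w.1 - ζ.1) * Wf (w.2 - ζ.2)))) z
              ≤ ∫⁻ z, (sqWin ζ (pw (n+1))).indicator
                (fun w => ENNReal.ofReal ((Real.sqrt 2)⁻¹ * (Wf (w.1 - ζ.1) * Wf (w.2 - ζ.2)))) z :=
                MeasureTheory.setLIntegral_le_lintegral _ _
            _ = ∫⁻ z in sqWin ζ (pw (n+1)),
                ENNReal.ofReal ((Real.sqrt 2)⁻¹ * (Wf (z.1 - ζ.1) * Wf (z.2 - ζ.2))) :=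
                lintegral_indicator (measurableSet_sqWin ζ (pw (n+1))) _
            _ ≤ ENNReal.ofReal (16 * pw (n+1)) := near_lintegral ζ (pw_pos (n+1))
            _ = ENNReal.ofReal (4 * pw n) := by
                congr 1
                rw [pw, pw, pow_succ]
                have h4 : ((4:ℝ)^n) ≠ 0 := by positivity
                field_simp
                ring
    _ = ENNReal.ofReal ((64 * (n+1) + 5) * pw n) := by
        have w1 : (0:ℝ) ≤ pw n := (pw_pos n).le
        have w2 : (0:ℝ) ≤ ((n:ℝ)+1) * (64 * pw n) := by
          apply mul_nonneg (by positivity)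
          linarith
        have w3 : (0:ℝ) ≤ 4 * pw n := by linarith
        rw [← ENNReal.ofReal_add w1 w2, ← ENNReal.ofReal_add (by linarith) w3]
        congr 1
        ring

end

noncomputable section
open scoped ENNReal

lemma euclDist_comm (z ζ : ℝ × ℝ) : euclDist z ζ = euclDist ζ z := by
  rw [euclDist, euclDist]
  ring_nf

lemma measurable_euclDist_left (z : ℝ × ℝ) : Measurable fun ζ : ℝ × ℝ => euclDist z ζ := by
  apply Measurable.sqrt
  fun_prop

lemma inner_integral_eq (n : ℕ) (z : ℝ × ℝ) :
    (∫ ζ in cantorK n, (euclDist z ζ)⁻¹)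
      = (∫⁻ ζ in cantorK n, ENNReal.ofReal ((euclDist z ζ)⁻¹)).toReal := by
  rw [MeasureTheory.integral_eq_lintegral_of_nonneg_ae
    (Filter.Eventually.of_forall fun ζ => inv_nonneg.mpr (euclDist_nonneg z ζ))
    ((measurable_euclDist_left z).inv.aestronglyMeasurable)]

lemma inner_le (n : ℕ) (z : ℝ × ℝ) :
    (∫ ζ in cantorK n, (euclDist z ζ)⁻¹) ≤ (64 * ((n:ℝ)+1) + 5) * pw n := by
  rw [inner_integral_eq]
  apply ENNReal.toReal_le_of_le_ofReal
    (mul_nonneg (by positivity) (pw_pos n).le)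
  calc ∫⁻ ζ in cantorK n, ENNReal.ofReal ((euclDist z ζ)⁻¹)
      = ∫⁻ ζ in cantorK n, ENNReal.ofReal ((euclDist ζ z)⁻¹) := by
        apply lintegral_congr
        intro ζ
        rw [euclDist_comm]
    _ ≤ ENNReal.ofReal ((64 * ((n:ℝ)+1) + 5) * pw n) := inner_lintegral_le n z

lemma outer_measurable (n : ℕ) :
    Measurable fun z : ℝ × ℝ => (∫⁻ ζ in cantorK n, ENNReal.ofReal ((euclDist z ζ)⁻¹)).toReal := by
  apply Measurable.ennreal_toReal
  apply Measurable.lintegral_prod_right (f := fun z ζ => ENNReal.ofReal ((euclDist z ζ)⁻¹))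
  exact measurable_euclDist_pair.inv.ennreal_ofReal

end

/-- There exists `C > 0` such that for every `n ≥ 1`, the Riesz 1-energy of the
normalized measure `μ_n = 4^n · Leb|_{K_n}` satisfies
`∫∫ |z − ζ|⁻¹ dμ_n dμ_n = 16^n ∫_{K_n} ∫_{K_n} |z − ζ|⁻¹ dz dζ ≤ C · n`. -/
theorem riesz_energy_cantorK_le : ∃ C : ℝ, 0 < C ∧ ∀ n : ℕ, 1 ≤ n →
    (16 : ℝ) ^ n * ∫ z in cantorK n, ∫ ζ in cantorK n, (euclDist z ζ)⁻¹ ≤ C * n := by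
  refine ⟨138, by norm_num, fun n hn => ?_⟩
  set B : ℝ := (64 * ((n:ℝ)+1) + 5) * pw n with hB
  have hBnn : 0 ≤ B := mul_nonneg (by positivity) (pw_pos n).le
  have hfin : volume (cantorK n) < ⊤ :=
    lt_of_le_of_lt (volume_cantorK_le n) ENNReal.ofReal_lt_top
  have hfm : AEStronglyMeasurable (fun z : ℝ × ℝ => ∫ ζ in cantorK n, (euclDist z ζ)⁻¹)
      (volume.restrict (cantorK n)) := by
    have : (fun z : ℝ × ℝ => ∫ ζ in cantorK n, (euclDist z ζ)⁻¹)
        = fun z => (∫⁻ ζ in cantorK n, ENNReal.ofReal ((euclDist z ζ)⁻¹)).toReal := by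
      funext z
      exact inner_integral_eq n z
    rw [this]
    exact (outer_measurable n).aestronglyMeasurable
  have hbd : ∀ z ∈ cantorK n, ‖∫ ζ in cantorK n, (euclDist z ζ)⁻¹‖ ≤ B := by
    intro z _
    rw [Real.norm_eq_abs, abs_of_nonneg
      (MeasureTheory.integral_nonneg fun ζ => inv_nonneg.mpr (euclDist_nonneg z ζ))]
    exact inner_le n z
  have hnorm := MeasureTheory.norm_setIntegral_le_of_norm_le_const hfin hbd
  have htr : (volume (cantorK n)).toReal ≤ pw n :=
    ENNReal.toReal_le_of_le_ofReal (pw_pos n).le (volume_cantorK_le n)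
  have hE : (∫ z in cantorK n, ∫ ζ in cantorK n, (euclDist z ζ)⁻¹) ≤ B * pw n := by
    calc (∫ z in cantorK n, ∫ ζ in cantorK n, (euclDist z ζ)⁻¹)
        ≤ ‖∫ z in cantorK n, ∫ ζ in cantorK n, (euclDist z ζ)⁻¹‖ := le_abs_self _
      _ ≤ B * (volume (cantorK n)).toReal := hnorm
      _ ≤ B * pw n := mul_le_mul_of_nonneg_left htr hBnn
  have hpow : (0:ℝ) < 16 ^ n := by positivity
  calc (16 : ℝ) ^ n * ∫ z in cantorK n, ∫ ζ in cantorK n, (euclDist z ζ)⁻¹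
      ≤ (16 : ℝ) ^ n * (B * pw n) := mul_le_mul_of_nonneg_left hE hpow.le
    _ = 64 * ((n:ℝ)+1) + 5 := by
        rw [hB, pw]
        have h16 : (4:ℝ)^n * (4:ℝ)^n = 16^n := by
          rw [← mul_pow]; norm_num
        have hne : ((4:ℝ)^n) ≠ 0 := by positivity
        field_simp
        rw [← h16]
        ring
    _ ≤ 138 * n := by
        have : (1:ℝ) ≤ (n:ℝ) := by exact_mod_cast hn
        linarith
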